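/- arXiv:2210.02481 — 7 statements merged into one kernel-verified Lean document; each statement's English description precedes it below -/
import Mathlib

section
/- Let s be a traceless invertible 2×2 matrix over K (char ≠ 2). Then conjugation by s acts on sl₂(K) as the orthogonal reflection fixing the line K·s: for all x ∈ sl₂(K), s x s⁻¹ + x = 2·(⟨s,x⟩/⟨s,s⟩)·s, where ⟨a,b⟩ = -(1/2)Tr(ab). -/
theorem conj_by_symmetry_is_reflection
    {K : Type*} [Field K] (h2 : (2 : K) ≠ 0)
    (s : Matrix (Fin 2) (Fin 2) K) (hs : s.trace = 0) (hds : s.det ≠ 0)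
    (x : Matrix (Fin 2) (Fin 2) K) (hx : x.trace = 0) :
    s * x * s⁻¹ + x
      = (2 * (-(2⁻¹ : K) * (s * x).trace) / (-(2⁻¹ : K) * (s * s).trace)) • s := by
  rw [Matrix.trace_fin_two] at hs hx
  have hs' : s 1 1 = - s 0 0 := by linear_combination hs
  have hx' : x 1 1 = - x 0 0 := by linear_combination hx
  -- adjugate of a traceless 2x2 matrix is -s
  have hadj : s.adjugate = -s := by
    rw [Matrix.adjugate_fin_two]
    ext i j
    fin_cases i <;> fin_cases j <;> simp [hs']
  have hinv : s⁻¹ = (-(s.det)⁻¹) • s := by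
    rw [Matrix.inv_def, hadj, Ring.inverse_eq_inv]
    ext i j; simp
  -- key identity: s*x*s = tr(s*x) • s + det s • x
  have hkey : s * x * s = (s * x).trace • s + s.det • x := by
    ext i j
    fin_cases i <;> fin_cases j <;>
      · simp [Matrix.trace_fin_two, Matrix.mul_apply, Fin.sum_univ_two, Matrix.det_fin_two,
          hs', hx']
        ring
  have htrss : (s * s).trace = -2 * s.det := by
    simp [Matrix.trace_fin_two, Matrix.mul_apply, Fin.sum_univ_two, Matrix.det_fin_two, hs']
    ring
  have hcoef : (2 * (-(2⁻¹ : K) * (s * x).trace) / (-(2⁻¹ : K) * (s * s).trace))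
      = -(s.det)⁻¹ * (s * x).trace := by
    rw [htrss]
    field_simp
  rw [hcoef, hinv, Matrix.mul_smul, hkey, smul_add, smul_smul, smul_smul, mul_comm,
    ← smul_smul]
  rw [neg_mul, inv_mul_cancel₀ hds, neg_smul, neg_one_smul, neg_add_cancel_right]
end

section
/- For any nonisotropic q ∈ GL₂(K) (det(q) ≠ 0), the orthogonal reflection σ_q of the quadratic space (M₂(K), det) with vector q is given by σ_q(m) = -q·m^#·q/det(q); in particular σ_q(m) = m - 2(⟨q,m⟩/⟨q,q⟩)·q for all m ∈ M₂(K). -/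
theorem reflection_formula
    {K : Type*} [Field K] (h2 : (2 : K) ≠ 0)
    (q : Matrix (Fin 2) (Fin 2) K) (hq : q.det ≠ 0)
    (m : Matrix (Fin 2) (Fin 2) K) :
    -((q.det)⁻¹ • (q * m.adjugate * q))
      = m - (2 * ((2⁻¹ : K) * (q * m.adjugate).trace)
              / ((2⁻¹ : K) * (q * q.adjugate).trace)) • q := by
  have hqq : q * q.adjugate = q.det • 1 := Matrix.mul_adjugate q
  have htr : (q * q.adjugate).trace = 2 * q.det := by
    rw [hqq]; simp [Matrix.trace_smul, Matrix.trace_one]; ring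
  rw [htr]
  have hscal : 2 * ((2⁻¹ : K) * (q * m.adjugate).trace) / ((2⁻¹ : K) * (2 * q.det))
      = (q * m.adjugate).trace / q.det := by
    field_simp
  rw [hscal]
  have key : -(q * m.adjugate * q) = q.det • m - (q * m.adjugate).trace • q := by
    ext i j
    fin_cases i <;> fin_cases j <;>
      simp [Matrix.adjugate_fin_two, Matrix.mul_apply, Matrix.trace_fin_two,
        Fin.sum_univ_two, Matrix.det_fin_two] <;> ring
  rw [div_eq_mul_inv, mul_comm, ← smul_smul, ← smul_neg, key, smul_sub, smul_smul,
    inv_mul_cancel₀ hq, one_smul, smul_comm]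
end

section
/- Let a, b be distinct traceless 2×2 matrices over K (char ≠ 2) with det(a) = det(b) = d ≠ 0 and d + ⟨a,b⟩ ≠ 0, where ⟨a,b⟩ = -(1/2)Tr(ab). Then the matrix M = Id + {a,b}/(d + ⟨a,b⟩) satisfies M·a = b·M, Tr(M) = 2, and det(M) = 2d/(d + ⟨a,b⟩). -/
theorem conjugator_in_quadratic_algebra
    {K : Type*} [Field K] (h2 : (2 : K) ≠ 0)
    (a b : Matrix (Fin 2) (Fin 2) K) (ha : a.trace = 0) (hb : b.trace = 0)
    (hab : a ≠ b) (d : K) (hda : a.det = d) (hdb : b.det = d) (hd : d ≠ 0)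
    (hip : d + (-(2⁻¹ : K) * (a * b).trace) ≠ 0) :
    (1 + (d + (-(2⁻¹ : K) * (a * b).trace))⁻¹ • ((2⁻¹ : K) • (a * b - b * a))) * a
      = b * (1 + (d + (-(2⁻¹ : K) * (a * b).trace))⁻¹ • ((2⁻¹ : K) • (a * b - b * a))) ∧
    (1 + (d + (-(2⁻¹ : K) * (a * b).trace))⁻¹ • ((2⁻¹ : K) • (a * b - b * a))).trace = 2 ∧
    (1 + (d + (-(2⁻¹ : K) * (a * b).trace))⁻¹ • ((2⁻¹ : K) • (a * b - b * a))).det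
      = 2 * d / (d + (-(2⁻¹ : K) * (a * b).trace)) := by
  obtain ⟨p, q, r, s, rfl⟩ : ∃ p q r s, a = !![p,q;r,s] := ⟨_,_,_,_, Matrix.eta_fin_two a⟩
  obtain ⟨p', q', r', s', rfl⟩ : ∃ p q r s, b = !![p,q;r,s] := ⟨_,_,_,_, Matrix.eta_fin_two b⟩
  simp only [Matrix.trace_fin_two_of, Matrix.det_fin_two_of] at ha hb hda hdb
  obtain rfl : s = -p := by linear_combination ha
  obtain rfl : s' = -p' := by linear_combination hb
  have hmul : !![p,q;r,-p] * !![p',q';r',-p']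
      = !![p*p' + q*r', p*q' - q*p'; r*p' - p*r', r*q' + p*p'] := by
    rw [Matrix.mul_fin_two]; congr 1 <;> ring
  have hmul' : !![p',q';r',-p'] * !![p,q;r,-p]
      = !![p*p' + q'*r, p'*q - q'*p; r'*p - p'*r, r'*q + p*p'] := by
    rw [Matrix.mul_fin_two]; congr 1 <;> ring
  have ht : (!![p,q;r,-p] * !![p',q';r',-p']).trace = 2*p*p' + q*r' + r*q' := by
    rw [hmul, Matrix.trace_fin_two_of]; ring
  rw [ht] at hip ⊢
  have hef : (d + -(2⁻¹:K) * (2*p*p' + q*r' + r*q')) * (d + -(2⁻¹:K) * (2*p*p' + q*r' + r*q'))⁻¹ = 1 := mul_inv_cancel₀ hip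
  have h21 : (2:K) * (2⁻¹:K) = 1 := mul_inv_cancel₀ h2
  have hM : (1 : Matrix (Fin 2) (Fin 2) K) + (d + -(2⁻¹:K) * (2*p*p' + q*r' + r*q'))⁻¹ • ((2⁻¹ : K) •
        (!![p,q;r,-p] * !![p',q';r',-p'] - !![p',q';r',-p'] * !![p,q;r,-p]))
      = !![1 + (d + -(2⁻¹:K) * (2*p*p' + q*r' + r*q'))⁻¹ * (2⁻¹ * (q*r' - q'*r)), (d + -(2⁻¹:K) * (2*p*p' + q*r' + r*q'))⁻¹ * (2⁻¹ * (p*q' - q*p' - p'*q + q'*p));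
          (d + -(2⁻¹:K) * (2*p*p' + q*r' + r*q'))⁻¹ * (2⁻¹ * (r*p' - p*r' - r'*p + p'*r)), 1 + (d + -(2⁻¹:K) * (2*p*p' + q*r' + r*q'))⁻¹ * (2⁻¹ * (r*q' - r'*q))] := by
    rw [hmul, hmul', Matrix.one_fin_two]
    ext i j
    fin_cases i <;> fin_cases j <;>
      simp only [Matrix.add_apply, Matrix.smul_apply, Matrix.sub_apply,
        Matrix.cons_val', Matrix.cons_val_zero, Matrix.cons_val_one, Matrix.head_cons,
        Matrix.head_fin_const, Matrix.of_apply, Matrix.empty_val', Matrix.cons_val_fin_one,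
        smul_eq_mul, Fin.mk_zero, Fin.mk_one, Fin.isValue] <;> ring
  rw [hM]
  refine ⟨?_, ?_, ?_⟩
  · rw [Matrix.mul_fin_two, Matrix.mul_fin_two]
    ext i j
    fin_cases i <;> fin_cases j <;>
      simp only [Matrix.cons_val', Matrix.cons_val_zero, Matrix.cons_val_one, Matrix.head_cons,
        Matrix.head_fin_const, Matrix.of_apply, Matrix.empty_val', Matrix.cons_val_fin_one,
        Fin.mk_zero, Fin.mk_one, Fin.isValue]
    · linear_combination (-(p - p')) * hef + (d + -(2⁻¹:K) * (2*p*p' + q*r' + r*q'))⁻¹ * (p' * hda - p * hdb) + ((-1)*q*r*p' + p*q'*r' + p*p'*p' + (-1)*p*p*p')*(d + -(2⁻¹:K) * (2*p*p' + q*r' + r*q'))⁻¹ * h21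
    · linear_combination (-(q - q')) * hef + (d + -(2⁻¹:K) * (2*p*p' + q*r' + r*q'))⁻¹ * (q' * hda - q * hdb) + (q*q'*r' + q*p'*p' + (-1)*q*r*q' + (-1)*p*p*q')*(d + -(2⁻¹:K) * (2*p*p' + q*r' + r*q'))⁻¹ * h21
    · linear_combination (-(r - r')) * hef + (d + -(2⁻¹:K) * (2*p*p' + q*r' + r*q'))⁻¹ * (r' * hda - r * hdb) + (r*q'*r' + r*p'*p' + (-1)*q*r*r' + (-1)*p*p*r')*(d + -(2⁻¹:K) * (2*p*p' + q*r' + r*q'))⁻¹ * h21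
    · linear_combination (-(p' - p)) * hef + (d + -(2⁻¹:K) * (2*p*p' + q*r' + r*q'))⁻¹ * (-p' * hda + p * hdb) + (q*r*p' + (-1)*p*q'*r' + (-1)*p*p'*p' + p*p*p')*(d + -(2⁻¹:K) * (2*p*p' + q*r' + r*q'))⁻¹ * h21
  · rw [Matrix.trace_fin_two_of]; ring
  · rw [Matrix.det_fin_two_of, eq_div_iff hip]
    linear_combination ((d + -(2⁻¹:K) * (2*p*p' + q*r' + r*q'))*(d + -(2⁻¹:K) * (2*p*p' + q*r' + r*q'))⁻¹ + 1) * (2*d - (d + -(2⁻¹:K) * (2*p*p' + q*r' + r*q'))) * hef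
      + (d + -(2⁻¹:K) * (2*p*p' + q*r' + r*q'))⁻¹^2 * (d + -(2⁻¹:K) * (2*p*p' + q*r' + r*q')) * ((-(q'*r') - p'*p') * hda + d * hdb)
      + (q*r*q'*r'*d*(d + -(2⁻¹:K) * (2*p*p' + q*r' + r*q'))⁻¹*(d + -(2⁻¹:K) * (2*p*p' + q*r' + r*q'))⁻¹ + (2)*q*r*q'*r'*d*(2⁻¹:K)*(d + -(2⁻¹:K) * (2*p*p' + q*r' + r*q'))⁻¹*(d + -(2⁻¹:K) * (2*p*p' + q*r' + r*q'))⁻¹ + q*r*p'*p'*d*(d + -(2⁻¹:K) * (2*p*p' + q*r' + r*q'))⁻¹*(d + -(2⁻¹:K) * (2*p*p' + q*r' + r*q'))⁻¹ + (2)*q*r*p'*p'*d*(2⁻¹:K)*(d + -(2⁻¹:K) * (2*p*p' + q*r' + r*q'))⁻¹*(d + -(2⁻¹:K) * (2*p*p' + q*r' + r*q'))⁻¹ + (-1)*q*r*r*q'*q'*r'*(2⁻¹:K)*(d + -(2⁻¹:K) * (2*p*p' + q*r' + r*q'))⁻¹*(d + -(2⁻¹:K) * (2*p*p' + q*r' +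 r*q'))⁻¹ + (-2)*q*r*r*q'*q'*r'*(2⁻¹:K)*(2⁻¹:K)*(d + -(2⁻¹:K) * (2*p*p' + q*r' + r*q'))⁻¹*(d + -(2⁻¹:K) * (2*p*p' + q*r' + r*q'))⁻¹ + (-1)*q*r*r*p'*p'*q'*(2⁻¹:K)*(d + -(2⁻¹:K) * (2*p*p' + q*r' + r*q'))⁻¹*(d + -(2⁻¹:K) * (2*p*p' + q*r' + r*q'))⁻¹ + (-2)*q*r*r*p'*p'*q'*(2⁻¹:K)*(2⁻¹:K)*(d + -(2⁻¹:K) * (2*p*p' + q*r' + r*q'))⁻¹*(d + -(2⁻¹:K) * (2*p*p' + q*r' + r*q'))⁻¹ + (-1)*q*q*r*q'*r'*r'*(2⁻¹:K)*(d + -(2⁻¹:K) * (2*p*p' + q*r' + r*q'))⁻¹*(d + -(2⁻¹:K) * (2*p*p' + q*r' + r*q'))⁻¹ + (-2)*q*q*r*q'*r'*r'*(2⁻¹:K)*(2⁻¹:K)*(d + -(2⁻¹:K) * (2*p*p' + q*r' + r*q'))⁻¹*(d + -(2⁻¹:K) * (2*p*p' + q*r' + r*q'))⁻¹ + (-1)*q*q*r*p'*p'*r'*(2⁻¹:K)*(d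 + -(2⁻¹:K) * (2*p*p' + q*r' + r*q'))⁻¹*(d + -(2⁻¹:K) * (2*p*p' + q*r' + r*q'))⁻¹ + (-2)*q*q*r*p'*p'*r'*(2⁻¹:K)*(2⁻¹:K)*(d + -(2⁻¹:K) * (2*p*p' + q*r' + r*q'))⁻¹*(d + -(2⁻¹:K) * (2*p*p' + q*r' + r*q'))⁻¹ + (-2)*p*q*r*p'*q'*r'*(2⁻¹:K)*(d + -(2⁻¹:K) * (2*p*p' + q*r' + r*q'))⁻¹*(d + -(2⁻¹:K) * (2*p*p' + q*r' + r*q'))⁻¹ + (-4)*p*q*r*p'*q'*r'*(2⁻¹:K)*(2⁻¹:K)*(d + -(2⁻¹:K) * (2*p*p' + q*r' + r*q'))⁻¹*(d + -(2⁻¹:K) * (2*p*p' + q*r' + r*q'))⁻¹ + (-2)*p*q*r*p'*p'*p'*(2⁻¹:K)*(d + -(2⁻¹:K) * (2*p*p' + q*r' + r*q'))⁻¹*(d + -(2⁻¹:K) * (2*p*p' + q*r' + r*q'))⁻¹ + (-4)*p*q*r*p'*p'*p'*(2⁻¹:K)*(2⁻¹:K)*(d + -(2⁻¹:K) * (2*p*p'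 + q*r' + r*q'))⁻¹*(d + -(2⁻¹:K) * (2*p*p' + q*r' + r*q'))⁻¹ + p*p*q'*r'*d*(d + -(2⁻¹:K) * (2*p*p' + q*r' + r*q'))⁻¹*(d + -(2⁻¹:K) * (2*p*p' + q*r' + r*q'))⁻¹ + (2)*p*p*q'*r'*d*(2⁻¹:K)*(d + -(2⁻¹:K) * (2*p*p' + q*r' + r*q'))⁻¹*(d + -(2⁻¹:K) * (2*p*p' + q*r' + r*q'))⁻¹ + p*p*p'*p'*d*(d + -(2⁻¹:K) * (2*p*p' + q*r' + r*q'))⁻¹*(d + -(2⁻¹:K) * (2*p*p' + q*r' + r*q'))⁻¹ + (2)*p*p*p'*p'*d*(2⁻¹:K)*(d + -(2⁻¹:K) * (2*p*p' + q*r' + r*q'))⁻¹*(d + -(2⁻¹:K) * (2*p*p' + q*r' + r*q'))⁻¹ + (-1)*p*p*r*q'*q'*r'*(2⁻¹:K)*(d + -(2⁻¹:K) * (2*p*p' + q*r' + r*q'))⁻¹*(d + -(2⁻¹:K) * (2*p*p' + q*r' + r*q'))⁻¹ + (-2)*p*p*r*q'*q'*r'*(2⁻¹:K)*(2⁻¹:K)*(d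 + -(2⁻¹:K) * (2*p*p' + q*r' + r*q'))⁻¹*(d + -(2⁻¹:K) * (2*p*p' + q*r' + r*q'))⁻¹ + (-1)*p*p*r*p'*p'*q'*(2⁻¹:K)*(d + -(2⁻¹:K) * (2*p*p' + q*r' + r*q'))⁻¹*(d + -(2⁻¹:K) * (2*p*p' + q*r' + r*q'))⁻¹ + (-2)*p*p*r*p'*p'*q'*(2⁻¹:K)*(2⁻¹:K)*(d + -(2⁻¹:K) * (2*p*p' + q*r' + r*q'))⁻¹*(d + -(2⁻¹:K) * (2*p*p' + q*r' + r*q'))⁻¹ + (-1)*p*p*q*q'*r'*r'*(2⁻¹:K)*(d + -(2⁻¹:K) * (2*p*p' + q*r' + r*q'))⁻¹*(d + -(2⁻¹:K) * (2*p*p' + q*r' + r*q'))⁻¹ + (-2)*p*p*q*q'*r'*r'*(2⁻¹:K)*(2⁻¹:K)*(d + -(2⁻¹:K) * (2*p*p' + q*r' + r*q'))⁻¹*(d + -(2⁻¹:K) * (2*p*p' + q*r' + r*q'))⁻¹ + (-1)*p*p*q*p'*p'*r'*(2⁻¹:K)*(d + -(2⁻¹:K) * (2*p*p' + q*r' + r*q'))⁻¹*(d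 + -(2⁻¹:K) * (2*p*p' + q*r' + r*q'))⁻¹ + (-2)*p*p*q*p'*p'*r'*(2⁻¹:K)*(2⁻¹:K)*(d + -(2⁻¹:K) * (2*p*p' + q*r' + r*q'))⁻¹*(d + -(2⁻¹:K) * (2*p*p' + q*r' + r*q'))⁻¹ + (-2)*p*p*p*p'*q'*r'*(2⁻¹:K)*(d + -(2⁻¹:K) * (2*p*p' + q*r' + r*q'))⁻¹*(d + -(2⁻¹:K) * (2*p*p' + q*r' + r*q'))⁻¹ + (-4)*p*p*p*p'*q'*r'*(2⁻¹:K)*(2⁻¹:K)*(d + -(2⁻¹:K) * (2*p*p' + q*r' + r*q'))⁻¹*(d + -(2⁻¹:K) * (2*p*p' + q*r' + r*q'))⁻¹ + (-2)*p*p*p*p'*p'*p'*(2⁻¹:K)*(d + -(2⁻¹:K) * (2*p*p' + q*r' + r*q'))⁻¹*(d + -(2⁻¹:K) * (2*p*p' + q*r' + r*q'))⁻¹ + (-4)*p*p*p*p'*p'*p'*(2⁻¹:K)*(2⁻¹:K)*(d + -(2⁻¹:K) * (2*p*p' + q*r' + r*q'))⁻¹*(d + -(2⁻¹:K) * (2*p*p'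 + q*r' + r*q'))⁻¹) * h21
end

section
/- Let a, b ∈ sl₂(K) with det(a) = det(b) = -δ ≠ 0, a ≠ ±b, and set χ = (1/4)·bir(a,b) where bir(a,b) = 2δ/(δ - ⟨a,b⟩) (with ⟨a,b⟩ = -(1/2)Tr(ab), assuming ⟨a,b⟩ ≠ ±δ). Then there exists C ∈ SL₂(K) with C a C⁻¹ = b if and only if the Pell–Fermat equation x² - δy² = χ has a solution (x,y) ∈ K × K. -/
theorem CHtr {K : Type*} [Field K] (a : Matrix (Fin 2) (Fin 2) K) (ha : a.trace = 0) :
    a * a = (-a.det) • (1 : Matrix (Fin 2) (Fin 2) K) := by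
  have h11 : a 1 1 = -a 0 0 := by
    have := ha; rw [Matrix.trace_fin_two] at this; linear_combination this
  ext i j
  fin_cases i <;> fin_cases j <;>
    simp [Matrix.mul_apply, Fin.sum_univ_two, Matrix.det_fin_two, Matrix.one_apply, h11] <;> ring

theorem anticomm {K : Type*} [Field K] (n a : Matrix (Fin 2) (Fin 2) K)
    (hn : n.trace = 0) (ha : a.trace = 0) :
    n * a + a * n = (n * a).trace • (1 : Matrix (Fin 2) (Fin 2) K) := by
  have h11 : a 1 1 = -a 0 0 := by rw [Matrix.trace_fin_two] at ha; linear_combination ha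
  have hn11 : n 1 1 = -n 0 0 := by rw [Matrix.trace_fin_two] at hn; linear_combination hn
  ext i j
  fin_cases i <;> fin_cases j <;>
    simp [Matrix.mul_apply, Fin.sum_univ_two, Matrix.trace_fin_two, Matrix.one_apply, h11, hn11] <;> ring

theorem detcomb {K : Type*} [Field K] {δ : K} (a : Matrix (Fin 2) (Fin 2) K)
    (ha : a.trace = 0) (hda : a.det = -δ) (x y : K) :
    (x • (1 : Matrix (Fin 2) (Fin 2) K) + y • a).det = x ^ 2 - δ * y ^ 2 := by
  have h11 : a 1 1 = -a 0 0 := by rw [Matrix.trace_fin_two] at ha; linear_combination ha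
  rw [Matrix.det_fin_two] at hda ⊢
  simp only [Matrix.add_apply, Matrix.smul_apply, Matrix.one_apply, smul_eq_mul, h11] at hda ⊢
  norm_num
  linear_combination ((y^2) : K) * hda

theorem detadd {K : Type*} [Field K] (a b : Matrix (Fin 2) (Fin 2) K)
    (ha : a.trace = 0) (hb : b.trace = 0) :
    (a + b).det = a.det + b.det - (a * b).trace := by
  have h11 : a 1 1 = -a 0 0 := by rw [Matrix.trace_fin_two] at ha; linear_combination ha
  have hb11 : b 1 1 = -b 0 0 := by rw [Matrix.trace_fin_two] at hb; linear_combination hb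
  rw [Matrix.det_fin_two, Matrix.det_fin_two, Matrix.det_fin_two, Matrix.trace_fin_two]
  simp only [Matrix.add_apply, Matrix.mul_apply, Fin.sum_univ_two, h11, hb11]
  ring

theorem centralizer {K : Type*} [Field K] (h2 : (2 : K) ≠ 0) {δ : K} (hδ : δ ≠ 0)
    (a m : Matrix (Fin 2) (Fin 2) K) (ha : a.trace = 0) (hda : a.det = -δ)
    (hm : m * a = a * m) : ∃ x y : K, m = x • 1 + y • a := by
  have ha2 : a * a = δ • (1 : Matrix (Fin 2) (Fin 2) K) := by
    rw [CHtr a ha, hda, neg_neg]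
  have hone : (1 : Matrix (Fin 2) (Fin 2) K).trace = 2 := by
    simp [Matrix.trace_one]
  refine ⟨m.trace / 2, (m * a).trace / (2 * δ), ?_⟩
  set x := m.trace / 2 with hx
  set y := (m * a).trace / (2 * δ) with hy
  set n := m - x • 1 - y • a with hn
  suffices h : n = 0 by
    have := h; rw [hn, sub_sub, sub_eq_zero] at this; exact this
  have hntr : n.trace = 0 := by
    rw [hn, Matrix.trace_sub, Matrix.trace_sub, Matrix.trace_smul, Matrix.trace_smul, hone, ha,
      hx, smul_eq_mul, smul_eq_mul]
    field_simp
    ring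
  have hexp : n * a = m * a - x • a - (y * δ) • (1 : Matrix (Fin 2) (Fin 2) K) := by
    rw [hn, sub_mul, sub_mul, smul_mul_assoc, smul_mul_assoc, one_mul, ha2, smul_smul]
  have hnatr : (n * a).trace = 0 := by
    rw [hexp, Matrix.trace_sub, Matrix.trace_sub, Matrix.trace_smul, Matrix.trace_smul, hone, ha,
      hy, smul_eq_mul, smul_eq_mul]
    field_simp
    ring
  have hcomm : n * a = a * n := by
    rw [hn]
    simp only [sub_mul, mul_sub, smul_mul_assoc, mul_smul_comm, one_mul, mul_one, hm]
  have hanti := anticomm n a hntr ha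
  rw [hnatr, zero_smul, ← hcomm] at hanti
  have hna : n * a = 0 := by
    have h2s : (2 : K) • (n * a) = 0 := by rw [two_smul]; exact hanti
    exact (smul_eq_zero.mp h2s).resolve_left h2
  have hz : n * (a * a) = 0 := by rw [← mul_assoc, hna, zero_mul]
  rw [ha2, mul_smul_comm, mul_one] at hz
  exact (smul_eq_zero.mp hz).resolve_left hδ

theorem sl2_conjugacy_iff_pell_fermat
    {K : Type*} [Field K] (h2 : (2 : K) ≠ 0)
    (δ : K) (hδ : δ ≠ 0)
    (a b : Matrix (Fin 2) (Fin 2) K) (ha : a.trace = 0) (hb : b.trace = 0)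
    (hda : a.det = -δ) (hdb : b.det = -δ) (hab : a ≠ b) (hab' : a ≠ -b)
    (hip : -(2⁻¹ : K) * (a * b).trace ≠ δ) (hip' : -(2⁻¹ : K) * (a * b).trace ≠ -δ) :
    (∃ C : Matrix (Fin 2) (Fin 2) K, C.det = 1 ∧ C * a * C⁻¹ = b) ↔
      ∃ x y : K, x ^ 2 - δ * y ^ 2
        = (4⁻¹ : K) * (2 * δ / (δ - (-(2⁻¹ : K) * (a * b).trace))) := by
  have ha2 : a * a = δ • (1 : Matrix (Fin 2) (Fin 2) K) := by
    rw [CHtr a ha, hda, neg_neg]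
  have hb2 : b * b = δ • (1 : Matrix (Fin 2) (Fin 2) K) := by
    rw [CHtr b hb, hdb, neg_neg]
  have h4 : (4 : K) ≠ 0 := by
    have h44 : (4 : K) = 2 * 2 := by norm_num
    rw [h44]; exact mul_ne_zero h2 h2
  obtain ⟨t, htdef⟩ : ∃ t : K, t = -(2⁻¹ : K) * (a * b).trace := ⟨_, rfl⟩
  rw [← htdef] at hip hip' ⊢
  have htr : (a * b).trace = -2 * t := by rw [htdef]; field_simp
  have hdt : δ - t ≠ 0 := sub_ne_zero.mpr (Ne.symm hip)
  set G : Matrix (Fin 2) (Fin 2) K := a + b with hGdef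
  have hGa : G * a = b * G := by
    rw [hGdef, add_mul, mul_add, ha2, hb2, add_comm]
  have hdetG : G.det = 2 * t - 2 * δ := by
    rw [hGdef, detadd a b ha hb, hda, hdb, htr]; ring
  have h2t : (2 * t - 2 * δ : K) ≠ 0 := by
    intro h; apply hdt
    have hz : (2 : K) * (δ - t) = 0 := by linear_combination -h
    exact (mul_eq_zero.mp hz).resolve_left h2
  have hdetG0 : G.det ≠ 0 := by rw [hdetG]; exact h2t
  have hGinv : G * G⁻¹ = 1 := Matrix.mul_nonsing_inv G (isUnit_iff_ne_zero.mpr hdetG0)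
  have hGinv' : G⁻¹ * G = 1 := Matrix.nonsing_inv_mul G (isUnit_iff_ne_zero.mpr hdetG0)
  constructor
  · rintro ⟨C, hC1, hC2⟩
    have hCdet0 : C.det ≠ 0 := by rw [hC1]; exact one_ne_zero
    have hCinv : C⁻¹ * C = 1 := Matrix.nonsing_inv_mul C (isUnit_iff_ne_zero.mpr hCdet0)
    have hCa : C * a = b * C := by
      calc C * a = C * a * (C⁻¹ * C) := by rw [hCinv, mul_one]
        _ = (C * a * C⁻¹) * C := by rw [mul_assoc (C * a) C⁻¹ C]
        _ = b * C := by rw [hC2]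
    have h1 : G⁻¹ * b = a * G⁻¹ := by
      calc G⁻¹ * b = G⁻¹ * (b * G) * G⁻¹ := by
            rw [mul_assoc G⁻¹ (b * G) G⁻¹, mul_assoc b G G⁻¹, hGinv, mul_one]
        _ = G⁻¹ * (G * a) * G⁻¹ := by rw [hGa]
        _ = a * G⁻¹ := by rw [← mul_assoc G⁻¹ G a, hGinv', one_mul]
    have hma : (G⁻¹ * C) * a = a * (G⁻¹ * C) := by
      calc (G⁻¹ * C) * a = G⁻¹ * (C * a) := by rw [mul_assoc]
        _ = G⁻¹ * (b * C) := by rw [hCa]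
        _ = (G⁻¹ * b) * C := by rw [mul_assoc]
        _ = a * (G⁻¹ * C) := by rw [h1, mul_assoc]
    obtain ⟨x, y, hxy⟩ := centralizer h2 hδ a (G⁻¹ * C) ha hda hma
    have hdm : (G⁻¹ * C).det = (2 * t - 2 * δ)⁻¹ := by
      rw [Matrix.det_mul, hC1, mul_one, Matrix.det_nonsing_inv, hdetG, Ring.inverse_eq_inv']
    have hval : x ^ 2 - δ * y ^ 2 = (2 * t - 2 * δ)⁻¹ := by
      rw [← detcomb a ha hda x y, ← hxy, hdm]
    refine ⟨δ * y, x, ?_⟩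
    have hstep : (δ * y) ^ 2 - δ * x ^ 2 = -δ * (x ^ 2 - δ * y ^ 2) := by ring
    rw [hstep, hval]
    field_simp [h2t, hdt, h4]
    ring
  · rintro ⟨x, y, hxy⟩
    set p : Matrix (Fin 2) (Fin 2) K := y • 1 + (x / δ) • a with hpdef
    refine ⟨G * p, ?_, ?_⟩
    · have huv : y ^ 2 - δ * (x / δ) ^ 2 = (2 * t - 2 * δ)⁻¹ := by
        have hstep : y ^ 2 - δ * (x / δ) ^ 2 = -(x ^ 2 - δ * y ^ 2) / δ := by
          field_simp; ring
        rw [hstep, hxy]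
        field_simp [h2t, hdt, h4]
        ring
      rw [Matrix.det_mul, hdetG, hpdef, detcomb a ha hda y (x / δ), huv,
        mul_inv_cancel₀ h2t]
    · have hcomm : p * a = a * p := by
        rw [hpdef]
        simp only [add_mul, mul_add, smul_mul_assoc, mul_smul_comm, one_mul, mul_one]
      have hdetC : (G * p).det ≠ 0 := by
        rw [Matrix.det_mul, hdetG, hpdef, detcomb a ha hda y (x / δ)]
        have huv : y ^ 2 - δ * (x / δ) ^ 2 = (2 * t - 2 * δ)⁻¹ := by
          have hstep : y ^ 2 - δ * (x / δ) ^ 2 = -(x ^ 2 - δ * y ^ 2) / δ := by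
            field_simp; ring
          rw [hstep, hxy]; field_simp [h2t, hdt, h4]; ring
        rw [huv, mul_inv_cancel₀ h2t]; exact one_ne_zero
      have hCa : (G * p) * a = b * (G * p) := by
        calc (G * p) * a = G * (p * a) := by rw [mul_assoc]
          _ = G * (a * p) := by rw [hcomm]
          _ = (G * a) * p := by rw [mul_assoc]
          _ = (b * G) * p := by rw [hGa]
          _ = b * (G * p) := by rw [mul_assoc]
      have hCinv : (G * p) * (G * p)⁻¹ = 1 := Matrix.mul_nonsing_inv _ (isUnit_iff_ne_zero.mpr hdetC)
      calc (G * p) * a * (G * p)⁻¹ = (b * (G * p)) * (G * p)⁻¹ := by rw [hCa]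
        _ = b * ((G * p) * (G * p)⁻¹) := by rw [mul_assoc]
        _ = b := by rw [hCinv, mul_one]
end

section
/- Let a, b ∈ sl₂(K) with det(a) = det(b) = -δ ≠ 0, ⟨a,b⟩ ≠ ±δ. If C ∈ K[{a,b}] := {s·Id + t·{a,b} : s,t ∈ K} is invertible and satisfies C a C⁻¹ = b, then writing 4χ = bir(a,b) = 2δ/(δ-⟨a,b⟩), the element C is a solution of the form C = x(Id + b·a⁻¹) with det(C) proportional to x²; in particular a and b are conjugate by an element of SL₂(K) ∩ K[{a,b}] if and only if bir(a,b) is a nonzero square in K. -/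
lemma aux_sq {K : Type*} [Field K] (δ : K) (a : Matrix (Fin 2) (Fin 2) K)
    (ha : a.trace = 0) (hda : a.det = -δ) : a * a = δ • 1 := by
  rw [Matrix.trace_fin_two] at ha
  rw [Matrix.det_fin_two] at hda
  ext i j
  fin_cases i <;> fin_cases j <;>
    simp [Matrix.mul_apply, Fin.sum_univ_two, Matrix.one_apply] <;>
    first
      | linear_combination a 0 0 * ha - hda
      | linear_combination a 0 1 * ha
      | linear_combination a 1 0 * ha
      | linear_combination a 1 1 * ha - hda

lemma aux_anti {K : Type*} [Field K] (a b : Matrix (Fin 2) (Fin 2) K)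
    (ha : a.trace = 0) (hb : b.trace = 0) :
    a * b + b * a = (a * b).trace • 1 := by
  rw [Matrix.trace_fin_two] at ha hb
  ext i j
  fin_cases i <;> fin_cases j <;>
    simp [Matrix.mul_apply, Fin.sum_univ_two, Matrix.one_apply, Matrix.trace_fin_two] <;>
    first
      | linear_combination b 0 1 * ha + a 0 1 * hb
      | linear_combination b 1 0 * ha + a 1 0 * hb
      | linear_combination a 0 0 * hb - b 1 1 * ha
      | linear_combination a 1 1 * hb - b 0 0 * ha

lemma aux_det {K : Type*} [Field K] (x y : K) (N : Matrix (Fin 2) (Fin 2) K) :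
    (x • (1 : Matrix (Fin 2) (Fin 2) K) + y • N).det
      = x ^ 2 + x * y * N.trace + y ^ 2 * N.det := by
  simp [Matrix.det_fin_two, Matrix.trace_fin_two, Matrix.one_apply]
  ring

theorem conjugacy_in_Kab_iff_bir_square
    {K : Type*} [Field K] (h2 : (2 : K) ≠ 0)
    (δ : K) (hδ : δ ≠ 0)
    (a b : Matrix (Fin 2) (Fin 2) K) (ha : a.trace = 0) (hb : b.trace = 0)
    (hda : a.det = -δ) (hdb : b.det = -δ)
    (hip : -(2⁻¹ : K) * (a * b).trace ≠ δ) (hip' : -(2⁻¹ : K) * (a * b).trace ≠ -δ) :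
    (∀ s t : K,
      IsUnit ((s • (1 : Matrix (Fin 2) (Fin 2) K) + t • ((2⁻¹ : K) • (a * b - b * a))).det) →
      (s • (1 : Matrix (Fin 2) (Fin 2) K) + t • ((2⁻¹ : K) • (a * b - b * a))) * a
        = b * (s • (1 : Matrix (Fin 2) (Fin 2) K) + t • ((2⁻¹ : K) • (a * b - b * a))) →
      ∃ x : K, s • (1 : Matrix (Fin 2) (Fin 2) K) + t • ((2⁻¹ : K) • (a * b - b * a))
        = x • (1 + b * a⁻¹)) ∧
    ((∃ C : Matrix (Fin 2) (Fin 2) K,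
        (∃ s t : K, C = s • (1 : Matrix (Fin 2) (Fin 2) K)
          + t • ((2⁻¹ : K) • (a * b - b * a))) ∧
        C.det = 1 ∧ C * a = b * C) ↔
      ∃ x : K, x ≠ 0 ∧ 2 * δ / (δ - (-(2⁻¹ : K) * (a * b).trace)) = x ^ 2) := by
  have ha2 : a * a = δ • 1 := aux_sq δ a ha hda
  have hb2 : b * b = δ • 1 := aux_sq δ b hb hdb
  set τ := (a * b).trace with hτ
  have hab : a * b + b * a = τ • 1 := aux_anti a b ha hb
  have h2inv : (2⁻¹ : K) * 2 = 1 := inv_mul_cancel₀ h2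
  have hδτ : δ + 2⁻¹ * τ ≠ 0 := fun h => hip (by linear_combination -h)
  have hanb : a ≠ b := by
    intro h
    apply hip'
    have hτ2 : τ = 2 * δ := by
      rw [hτ, h, hb2, Matrix.trace_smul, Matrix.trace_one]
      simp
      ring
    rw [hτ2]; linear_combination (-δ) * h2inv
  have hC : ∀ s t : K, s • (1 : Matrix (Fin 2) (Fin 2) K) + t • ((2⁻¹ : K) • (a * b - b * a))
      = (s + t * 2⁻¹ * τ) • (1 : Matrix (Fin 2) (Fin 2) K) + (-t) • (b * a) := by
    intro s t
    rw [show a * b - b * a = (a * b + b * a) - (2 : K) • (b * a) by module, hab]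
    rw [smul_sub, smul_smul, smul_smul, h2inv, one_smul]
    module
  have h3 : b * a * a = δ • b := by rw [mul_assoc, ha2, mul_smul_comm, mul_one]
  have h4 : b * (b * a) = δ • a := by rw [← mul_assoc, hb2, smul_mul_assoc, one_mul]
  have hkey : ∀ s t : K,
      (s • (1 : Matrix (Fin 2) (Fin 2) K) + t • ((2⁻¹ : K) • (a * b - b * a))) * a
        - b * (s • (1 : Matrix (Fin 2) (Fin 2) K) + t • ((2⁻¹ : K) • (a * b - b * a)))
      = (s + t * (2⁻¹ * τ + δ)) • (a - b) := by
    intro s t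
    rw [hC s t]
    calc ((s + t * 2⁻¹ * τ) • (1 : Matrix (Fin 2) (Fin 2) K) + (-t) • (b * a)) * a
        - b * ((s + t * 2⁻¹ * τ) • (1 : Matrix (Fin 2) (Fin 2) K) + (-t) • (b * a))
        = (s + t * 2⁻¹ * τ) • (a - b) + (-t) • (b * a * a) - (-t) • (b * (b * a)) := by
          simp only [add_mul, mul_add, smul_mul_assoc, mul_smul_comm, one_mul, mul_one]
          module
      _ = (s + t * (2⁻¹ * τ + δ)) • (a - b) := by
          rw [h3, h4]; module
  have hcoeff : ∀ s t : K,
      (s • (1 : Matrix (Fin 2) (Fin 2) K) + t • ((2⁻¹ : K) • (a * b - b * a))) * a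
        = b * (s • (1 : Matrix (Fin 2) (Fin 2) K) + t • ((2⁻¹ : K) • (a * b - b * a))) →
      s + t * (2⁻¹ * τ + δ) = 0 := by
    intro s t hcomm
    have h0 : (s + t * (2⁻¹ * τ + δ)) • (a - b) = 0 := by
      rw [← hkey s t, hcomm, sub_self]
    rcases smul_eq_zero.mp h0 with h | h
    · exact h
    · exact absurd (sub_eq_zero.mp h) hanb
  have hdetC : ∀ s t : K,
      (s • (1 : Matrix (Fin 2) (Fin 2) K) + t • ((2⁻¹ : K) • (a * b - b * a))).det
        = (s + t * 2⁻¹ * τ) ^ 2 + (s + t * 2⁻¹ * τ) * (-t) * τ + t ^ 2 * δ ^ 2 := by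
    intro s t
    rw [hC s t, aux_det, Matrix.trace_mul_comm, Matrix.det_mul, hdb, hda, ← hτ]
    ring
  constructor
  · -- Part 1
    intro s t _ hcomm
    have hco := hcoeff s t hcomm
    refine ⟨-(t * δ), ?_⟩
    have hainv : a⁻¹ = δ⁻¹ • a := by
      apply Matrix.inv_eq_right_inv
      rw [mul_smul_comm, ha2, smul_smul, inv_mul_cancel₀ hδ, one_smul]
    rw [hC s t, hainv, mul_smul_comm, smul_add]
    have hδδ : δ * δ⁻¹ = 1 := mul_inv_cancel₀ hδ
    match_scalars
    · linear_combination hco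
    · linear_combination t * hδδ
  · constructor
    · -- forward
      rintro ⟨C, ⟨s, t, rfl⟩, hdet1, hcomm⟩
      have hco := hcoeff s t hcomm
      rw [hdetC s t] at hdet1
      have h1 : t ^ 2 * (δ * (2 * δ + τ)) = 1 := by
        linear_combination hdet1 + (t * τ - s - t * 2⁻¹ * τ + t * δ) * hco
      have ht : t ≠ 0 := by
        intro h; rw [h] at h1; simp at h1
      have hne : t * (δ + 2⁻¹ * τ) ≠ 0 := mul_ne_zero ht hδτ
      refine ⟨(t * (δ + 2⁻¹ * τ))⁻¹, inv_ne_zero hne, ?_⟩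
      rw [show δ - -(2⁻¹ : K) * τ = δ + 2⁻¹ * τ by ring, inv_pow,
        div_eq_iff hδτ, eq_comm]
      have hv : (t * (δ + 2⁻¹ * τ)) ^ 2 * ((t * (δ + 2⁻¹ * τ)) ^ 2)⁻¹ = 1 :=
        mul_inv_cancel₀ (pow_ne_zero 2 hne)
      linear_combination 2 * δ * hv
        - ((t * (δ + 2⁻¹ * τ)) ^ 2)⁻¹ * (δ + 2⁻¹ * τ) * h1
        - ((t * (δ + 2⁻¹ * τ)) ^ 2)⁻¹ * t ^ 2 * δ * τ * (δ + 2⁻¹ * τ) * h2inv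
    · -- backward
      rintro ⟨x, hx, hxsq⟩
      have hd : δ - -(2⁻¹ : K) * τ = δ + 2⁻¹ * τ := by ring
      rw [hd, div_eq_iff hδτ] at hxsq
      refine ⟨_, ⟨-((x * (δ + 2⁻¹ * τ))⁻¹ * (2⁻¹ * τ + δ)), (x * (δ + 2⁻¹ * τ))⁻¹, rfl⟩, ?_, ?_⟩
      · rw [hdetC]
        have hxt : x * (δ + 2⁻¹ * τ) ≠ 0 := mul_ne_zero hx hδτ
        have ht0 : (x * (δ + 2⁻¹ * τ))⁻¹ * (x * (δ + 2⁻¹ * τ)) = 1 := inv_mul_cancel₀ hxt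
        linear_combination ((x * (δ + 2⁻¹ * τ))⁻¹ * (x * (δ + 2⁻¹ * τ)) + 1) * ht0
          + ((x * (δ + 2⁻¹ * τ))⁻¹) ^ 2 * (δ + 2⁻¹ * τ) * hxsq
          - ((x * (δ + 2⁻¹ * τ))⁻¹) ^ 2 * δ * τ * h2inv
      · have h0 := hkey (-((x * (δ + 2⁻¹ * τ))⁻¹ * (2⁻¹ * τ + δ))) ((x * (δ + 2⁻¹ * τ))⁻¹)
        rw [show -((x * (δ + 2⁻¹ * τ))⁻¹ * (2⁻¹ * τ + δ)) + (x * (δ + 2⁻¹ * τ))⁻¹ * (2⁻¹ * τ + δ) = 0 by ring,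
          zero_smul] at h0
        exact sub_eq_zero.mp h0
end

section
/- Let a, b ∈ sl₂(K) with det(a) = det(b) = -δ ≠ 0 and ⟨a,b⟩ ≠ ±δ, and set C = (1/2)√(bir(a,b))·(Id + b·a⁻¹) over an extension of K containing √(bir(a,b)), where bir(a,b) = 2δ/(δ-⟨a,b⟩). Then C² = b·a⁻¹ and det(C) = 1. -/
lemma tr0_sq {R : Type*} [CommRing R] (M : Matrix (Fin 2) (Fin 2) R) (h : M.trace = 0) :
    M * M = (-M.det) • 1 := by
  rw [Matrix.trace_fin_two] at h
  have h11 : M 1 1 = -M 0 0 := by linear_combination h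
  ext i j
  fin_cases i <;> fin_cases j <;>
    simp [Matrix.mul_apply, Fin.sum_univ_succ, Matrix.det_fin_two, Matrix.one_apply, h11] <;>
    ring

lemma tr0_anticomm {R : Type*} [CommRing R] (x y : Matrix (Fin 2) (Fin 2) R)
    (hx : x.trace = 0) (hy : y.trace = 0) :
    x * y + y * x = (x * y).trace • 1 := by
  rw [Matrix.trace_fin_two] at hx hy
  have hx11 : x 1 1 = -x 0 0 := by linear_combination hx
  have hy11 : y 1 1 = -y 0 0 := by linear_combination hy
  ext i j
  fin_cases i <;> fin_cases j <;>
    simp [Matrix.mul_apply, Fin.sum_univ_succ, Matrix.trace_fin_two, Matrix.one_apply,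
      hx11, hy11] <;> ring

lemma det_add_tr0 {R : Type*} [CommRing R] (x y : Matrix (Fin 2) (Fin 2) R)
    (hx : x.trace = 0) (hy : y.trace = 0) :
    (x + y).det = x.det + y.det - (x * y).trace := by
  rw [Matrix.trace_fin_two] at hx hy
  have hx11 : x 1 1 = -x 0 0 := by linear_combination hx
  have hy11 : y 1 1 = -y 0 0 := by linear_combination hy
  simp [Matrix.det_fin_two, Matrix.trace_fin_two, Matrix.mul_apply, Fin.sum_univ_succ,
    hx11, hy11]
  ring

theorem sqrt_bir_gives_square_root_of_ba_inv
    {K : Type*} [Field K] (h2 : (2 : K) ≠ 0)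
    {L : Type*} [Field L] [Algebra K L]
    (δ : K) (hδ : δ ≠ 0)
    (a b : Matrix (Fin 2) (Fin 2) K) (ha : a.trace = 0) (hb : b.trace = 0)
    (hda : a.det = -δ) (hdb : b.det = -δ)
    (hip : -(2⁻¹ : K) * (a * b).trace ≠ δ) (hip' : -(2⁻¹ : K) * (a * b).trace ≠ -δ)
    (r : L) (hr : r ^ 2 = algebraMap K L (2 * δ / (δ - (-(2⁻¹ : K) * (a * b).trace)))) :
    (((2⁻¹ : L) * r) • (1 + (b.map (algebraMap K L)) * (a.map (algebraMap K L))⁻¹))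
      * (((2⁻¹ : L) * r) • (1 + (b.map (algebraMap K L)) * (a.map (algebraMap K L))⁻¹))
      = (b.map (algebraMap K L)) * (a.map (algebraMap K L))⁻¹ ∧
    (((2⁻¹ : L) * r) • (1 + (b.map (algebraMap K L)) * (a.map (algebraMap K L))⁻¹)).det
      = 1 := by
  set φ := algebraMap K L with hφdef
  have hinj : Function.Injective φ := (algebraMap K L).injective
  have h2φ : φ 2 = 2 := map_ofNat φ 2
  have h2L : (2 : L) ≠ 0 := by
    rw [← h2φ]
    exact fun h0 => h2 (hinj (h0.trans (map_zero φ).symm))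
  set δL := φ δ with hδLdef
  have hδL : δL ≠ 0 := fun h0 => hδ (hinj (h0.trans (map_zero φ).symm))
  set A := a.map φ with hA
  set B := b.map φ with hB
  set τK := (a * b).trace with hτK
  set τ := φ τK with hτ
  -- basic facts about A and B
  have hta : a 0 0 + a 1 1 = 0 := by rwa [Matrix.trace_fin_two] at ha
  have htb : b 0 0 + b 1 1 = 0 := by rwa [Matrix.trace_fin_two] at hb
  have hAtr : A.trace = 0 := by
    rw [hA, Matrix.trace_fin_two, Matrix.map_apply, Matrix.map_apply, ← map_add, hta, map_zero]
  have hBtr : B.trace = 0 := by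
    rw [hB, Matrix.trace_fin_two, Matrix.map_apply, Matrix.map_apply, ← map_add, htb, map_zero]
  have hmapdet : ∀ m : Matrix (Fin 2) (Fin 2) K, (m.map φ).det = φ m.det := by
    intro m
    rw [RingHom.map_det, RingHom.mapMatrix_apply]
  have hAdet : A.det = -δL := by rw [hA, hmapdet, hda, map_neg]
  have hBdet : B.det = -δL := by rw [hB, hmapdet, hdb, map_neg]
  have hABmap : A * B = (a * b).map φ := (Matrix.map_mul (f := φ)).symm
  have hABtr : (A * B).trace = τ := by
    rw [hABmap, hτ, hτK, Matrix.trace_fin_two, Matrix.trace_fin_two]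
    simp [Matrix.map_apply, ← map_add]
  have hA2 : A * A = δL • 1 := by rw [tr0_sq A hAtr, hAdet, neg_neg]
  have hB2 : B * B = δL • 1 := by rw [tr0_sq B hBtr, hBdet, neg_neg]
  have hAunit : IsUnit A.det := by rw [hAdet]; exact (neg_ne_zero.mpr hδL).isUnit
  have hAinv : A⁻¹ = δL⁻¹ • A := by
    apply Matrix.inv_eq_right_inv
    rw [Matrix.mul_smul, hA2, smul_smul, inv_mul_cancel₀ hδL, one_smul]
  set P := B * A with hP
  have hBAinv : B * A⁻¹ = δL⁻¹ • P := by rw [hAinv, Matrix.mul_smul, hP]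
  have hAB' : A * B = τ • (1 : Matrix (Fin 2) (Fin 2) L) - P := by
    rw [← hABtr]
    exact eq_sub_of_add_eq (tr0_anticomm A B hAtr hBtr)
  have hPP : P * P = τ • P - (δL * δL) • 1 := by
    have h1 : P * P = B * (A * B) * A := by rw [hP]; noncomm_ring
    rw [h1, hAB', mul_sub, sub_mul, Matrix.mul_smul, mul_one, Matrix.smul_mul]
    have h3 : B * (B * A) * A = (δL • (1 : Matrix (Fin 2) (Fin 2) L)) * (δL • 1) := by
      have : B * (B * A) * A = (B * B) * (A * A) := by noncomm_ring
      rw [this, hB2, hA2]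
    rw [h3, Matrix.smul_mul, Matrix.mul_smul, smul_smul, one_mul]
  -- the scalar relation
  have hdK : δ - (-(2⁻¹ : K) * τK) ≠ 0 := sub_ne_zero.mpr (Ne.symm hip)
  have hr' : r ^ 2 * (δL + 2⁻¹ * τ) = 2 * δL := by
    rw [map_div₀] at hr
    have hφd : φ (δ - (-(2⁻¹ : K) * τK)) = δL + 2⁻¹ * τ := by
      rw [map_sub, map_mul, map_neg, map_inv₀, h2φ]
      ring
    have hφdne : φ (δ - (-(2⁻¹ : K) * τK)) ≠ 0 :=
      fun h0 => hdK (hinj (h0.trans (map_zero φ).symm))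
    have key := (div_eq_iff hφdne).mp hr.symm
    rw [hφd, map_mul, h2φ] at key
    linear_combination -key
  have hr'' : r ^ 2 * (2 * δL + τ) = 4 * δL := by
    have h := hr'
    field_simp at h
    linear_combination h
  constructor
  · rw [hBAinv]
    have hexp : ∀ m : Matrix (Fin 2) (Fin 2) L, (1 + m) * (1 + m) = 1 + m + m + m * m := by
      intro m; noncomm_ring
    rw [Matrix.smul_mul, Matrix.mul_smul, smul_smul, hexp]
    have hmm : (δL⁻¹ • P) * (δL⁻¹ • P) = (δL⁻¹ * δL⁻¹) • (P * P) := by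
      rw [Matrix.smul_mul, Matrix.mul_smul, smul_smul]
    rw [hmm, hPP]
    match_scalars
    · field_simp
      ring
    · field_simp
      linear_combination (1 : L) * hr''
  · have hfac : (1 : Matrix (Fin 2) (Fin 2) L) + B * A⁻¹ = (A + B) * A⁻¹ := by
      rw [add_mul, Matrix.mul_nonsing_inv A hAunit]
    rw [Matrix.det_smul, hfac, Matrix.det_mul, Matrix.det_nonsing_inv,
      det_add_tr0 A B hAtr hBtr, hAdet, hBdet, hABtr, Ring.inverse_eq_inv,
      Fintype.card_fin]
    field_simp
    linear_combination (1 : L) * hr''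
end

section
/- Define ψ: K² → sl₂(K) by ψ(v) = the matrix of the map w ↦ det(w,v)·v (a rank-one nilpotent endomorphism when v ≠ 0). Then ψ is two-to-one outside the origin (ψ(u) = ψ(v) with u,v ≠ 0 iff u = ±v), ψ(Cv) = C·ψ(v)·C⁻¹ for all C ∈ SL₂(K), and 2⟨ψ(u), ψ(v)⟩ = det(u,v)² where ⟨a,b⟩ = -(1/2)Tr(ab). -/
/-- The quadratic map `ψ : K² → sl₂(K)`, `ψ(v)` is the matrix of `w ↦ det(w,v)·v`. -/
def psi {K : Type*} [Field K] (v : Fin 2 → K) : Matrix (Fin 2) (Fin 2) K :=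
  Matrix.vecMulVec v ![v 1, -v 0]

lemma psi_apply {K : Type*} [Field K] (v : Fin 2 → K) (i j : Fin 2) :
    psi v i j = v i * (![v 1, -v 0] : Fin 2 → K) j := by
  simp [psi, Matrix.vecMulVec_apply]

lemma psi_entries {K : Type*} [Field K] (v : Fin 2 → K) :
    psi v 0 0 = v 0 * v 1 ∧ psi v 0 1 = -(v 0 * v 0) ∧
    psi v 1 0 = v 1 * v 1 ∧ psi v 1 1 = -(v 1 * v 0) := by
  refine ⟨?_, ?_, ?_, ?_⟩ <;> simp [psi_apply]

theorem psi_properties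
    {K : Type*} [Field K] (h2 : (2 : K) ≠ 0) :
    (∀ u v : Fin 2 → K, u ≠ 0 → v ≠ 0 → (psi u = psi v ↔ u = v ∨ u = -v)) ∧
    (∀ C : Matrix (Fin 2) (Fin 2) K, C.det = 1 →
      ∀ v : Fin 2 → K, psi (C.mulVec v) = C * psi v * C⁻¹) ∧
    (∀ u v : Fin 2 → K,
      2 * (-(2⁻¹ : K) * (psi u * psi v).trace) = (u 0 * v 1 - u 1 * v 0) ^ 2) := by
  refine ⟨?_, ?_, ?_⟩
  · intro u v hu hv
    constructor
    · intro h
      obtain ⟨e00, e01, e10, e11⟩ := psi_entries u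
      obtain ⟨f00, f01, f10, f11⟩ := psi_entries v
      have h00 : u 0 * u 1 = v 0 * v 1 := by rw [← e00, ← f00, h]
      have h01 : u 0 * u 0 = v 0 * v 0 := by
        have := congrFun (congrFun h 0) 1
        rw [e01, f01] at this
        linear_combination -this
      have h10 : u 1 * u 1 = v 1 * v 1 := by rw [← e10, ← f10, h]
      rcases mul_eq_zero.mp (show (u 0 - v 0) * (u 0 + v 0) = 0 by
          linear_combination h01) with h0 | h0 <;>
      rcases mul_eq_zero.mp (show (u 1 - v 1) * (u 1 + v 1) = 0 by
          linear_combination h10) with h1 | h1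
      · left; funext i; fin_cases i
        · simpa [sub_eq_zero] using h0
        · simpa [sub_eq_zero] using h1
      · -- u 0 = v 0, u 1 = -v 1
        have hu0 : u 0 = v 0 := sub_eq_zero.mp h0
        have hu1 : u 1 = -v 1 := eq_neg_of_add_eq_zero_left h1
        have h2' : (2 : K) * (v 0 * v 1) = 0 := by
          linear_combination -h00 + u 1 * hu0 + v 0 * hu1
        rcases mul_eq_zero.mp ((mul_eq_zero.mp h2').resolve_left h2) with hz | hz
        · right; funext i; fin_cases i
          · show u 0 = -v 0; rw [hu0, hz, neg_zero]
          · show u 1 = -v 1; exact hu1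
        · left; funext i; fin_cases i
          · exact hu0
          · show u 1 = v 1; rw [hu1, hz, neg_zero]
      · -- u 0 = -v 0, u 1 = v 1
        have hu0 : u 0 = -v 0 := eq_neg_of_add_eq_zero_left h0
        have hu1 : u 1 = v 1 := sub_eq_zero.mp h1
        have h2' : (2 : K) * (v 0 * v 1) = 0 := by
          linear_combination -h00 + u 1 * hu0 - v 0 * hu1
        rcases mul_eq_zero.mp ((mul_eq_zero.mp h2').resolve_left h2) with hz | hz
        · left; funext i; fin_cases i
          · show u 0 = v 0; rw [hu0, hz, neg_zero]
          · exact hu1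
        · right; funext i; fin_cases i
          · show u 0 = -v 0; exact hu0
          · show u 1 = -v 1; rw [hu1, hz, neg_zero]
      · right; funext i; fin_cases i
        · show u 0 = -v 0; exact eq_neg_of_add_eq_zero_left h0
        · show u 1 = -v 1; exact eq_neg_of_add_eq_zero_left h1
    · rintro (rfl | rfl)
      · rfl
      · funext i j
        simp [psi_apply]
        fin_cases j <;> simp
  · intro C hdet v
    have hC : IsUnit C.det := by rw [hdet]; exact isUnit_one
    rw [Matrix.det_fin_two] at hdet
    have key : psi (C.mulVec v) * C = C * psi v := by
      ext i j
      fin_cases i <;> fin_cases j <;>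
        simp [Matrix.mul_apply, Fin.sum_univ_two, psi_apply, Matrix.mulVec,
          dotProduct]
      · linear_combination ((C 0 0 * v 0 + C 0 1 * v 1) * v 1) * hdet
      · linear_combination (-(C 0 0 * v 0 + C 0 1 * v 1) * v 0) * hdet
      · linear_combination ((C 1 0 * v 0 + C 1 1 * v 1) * v 1) * hdet
      · linear_combination (-(C 1 0 * v 0 + C 1 1 * v 1) * v 0) * hdet
    calc psi (C.mulVec v) = psi (C.mulVec v) * (C * C⁻¹) := by
            rw [Matrix.mul_nonsing_inv C hC, mul_one]
      _ = (psi (C.mulVec v) * C) * C⁻¹ := by rw [mul_assoc]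
      _ = C * psi v * C⁻¹ := by rw [key]
  · intro u v
    have htr : (psi u * psi v).trace =
        (psi u 0 0 * psi v 0 0 + psi u 0 1 * psi v 1 0) +
        (psi u 1 0 * psi v 0 1 + psi u 1 1 * psi v 1 1) := by
      simp [Matrix.trace, Matrix.mul_apply, Fin.sum_univ_two]
    rw [htr]
    obtain ⟨e00, e01, e10, e11⟩ := psi_entries u
    obtain ⟨f00, f01, f10, f11⟩ := psi_entries v
    rw [e00, e01, e10, e11, f00, f01, f10, f11]
    field_simp
    ring
end
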